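/- arXiv:1302.1686 — 4 statements merged into one kernel-verified Lean document; each statement's English description precedes it below -/
import Mathlib

section
/- Let w be a nonzero vector in ℝ⁴. Then there is no linear map G : ℝ⁴ → ℝ⁴ such that for every unit timelike vector ξ one has G ξ = η(ξ, w) • ξ − w. (This is the pointwise content of Proposition 2: at any point p where the gradient of the conformal factor Ω is nonvanishing, no rank-2 tensor field G_ab can satisfy the trade-off equation relating ∇-geodesics to their acceleration Ω⁻³(ξᵃ ξⁿ∇ₙΩ − gᵃʳ∇ᵣΩ) relative to the Levi-Civita derivative operator of the conformally rescaled metric, for all unit timelike tangent vectors ξ at p.) -/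
/-- The Minkowski bilinear form on ℝ⁴. -/
def eta (u v : Fin 4 → ℝ) : ℝ :=
  u 0 * v 0 - u 1 * v 1 - u 2 * v 2 - u 3 * v 3

/-- Pointwise content of Proposition 2: for nonzero `w`, there is no linear map
`G : ℝ⁴ → ℝ⁴` with `G ξ = η(ξ,w) • ξ - w` for every unit timelike `ξ`. -/
theorem no_rank2_universal_force (w : Fin 4 → ℝ) (hw : w ≠ 0) :
    ¬ ∃ G : (Fin 4 → ℝ) →ₗ[ℝ] (Fin 4 → ℝ),
      ∀ ξ : Fin 4 → ℝ, eta ξ ξ = 1 → G ξ = eta ξ w • ξ - w := by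
  rintro ⟨G, hG⟩
  set s := Real.sqrt 2 with hsdef
  have hs : s * s = 2 := Real.mul_self_sqrt (by norm_num)
  have hs0 : 0 ≤ s := Real.sqrt_nonneg 2
  have hs1 : 1 < s := by nlinarith
  have hs2 : s < 2 := by nlinarith
  have h0 := hG ![1, 0, 0, 0] (by simp [eta])
  have hp := hG ![s, 1, 0, 0] (by simp [eta]; nlinarith)
  have hm := hG ![s, -1, 0, 0] (by simp [eta]; nlinarith)
  have hadd : (![s, 1, 0, 0] + ![s, -1, 0, 0] : Fin 4 → ℝ)
      = (2 * s) • ![1, 0, 0, 0] := by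
    funext i; fin_cases i <;> simp <;> ring
  have key : (eta ![s, 1, 0, 0] w) • ![s, 1, 0, 0] - w
      + ((eta ![s, -1, 0, 0] w) • ![s, -1, 0, 0] - w)
      = (2 * s) • ((eta ![1, 0, 0, 0] w) • ![1, 0, 0, 0] - w) := by
    rw [← hp, ← hm, ← h0, ← map_add, hadd, map_smul]
  apply hw
  have k0 := congrFun key 0
  have k1 := congrFun key 1
  have k2 := congrFun key 2
  have k3 := congrFun key 3
  simp [eta, Matrix.vecHead, Matrix.vecTail, Function.comp] at k0 k1 k2 k3
  have h3 : (Fin.succ 2 : Fin 4) = 3 := rfl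
  funext i
  fin_cases i <;> simp <;> nlinarith [k0, k1, k2, k3]
end

section
/- Let B : V → V → ℝ be a symmetric bilinear form on a real vector space V, suppose there exist two linearly independent vectors u₁, u₂ with B(u₁,u₁) = 1 and B(u₂,u₂) = 1, and let w ∈ V be nonzero. Then there is no linear map G : V → V such that G ξ = B(ξ, w) • ξ − w for every vector ξ with B(ξ,ξ) = 1. (This is the pointwise content of the paper's remark that Proposition 2 generalizes immediately to semi-Riemannian metrics of any signature: the relationship between the derivative operators of two conformally equivalent non-degenerate metrics can never be captured by a rank-2 tensor.) -/
/-- Semi-Riemannian generalization of the pointwise content of Proposition 2: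
for a symmetric bilinear form `B` admitting two linearly independent `B`-unit
vectors, and nonzero `w`, there is no linear map `G : V → V` with
`G ξ = B(ξ,w) • ξ - w` for every `B`-unit vector `ξ`. -/
theorem no_rank2_universal_force_semiRiemannian
    {V : Type*} [AddCommGroup V] [Module ℝ V]
    (B : V →ₗ[ℝ] V →ₗ[ℝ] ℝ) (hBsymm : ∀ u v : V, B u v = B v u)
    (u₁ u₂ : V) (hind : LinearIndependent ℝ ![u₁, u₂])
    (hu₁ : B u₁ u₁ = 1) (hu₂ : B u₂ u₂ = 1)
    (w : V) (hw : w ≠ 0) :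
    ¬ ∃ G : V →ₗ[ℝ] V, ∀ ξ : V, B ξ ξ = 1 → G ξ = B ξ w • ξ - w := by
  rintro ⟨G, hG⟩
  have key : ∀ ξ : V, B ξ ξ = 1 → w = B ξ w • ξ := by
    intro ξ hξ
    have h1 := hG ξ hξ
    have hneg : B (-ξ) (-ξ) = 1 := by simp [hξ]
    have h2 := hG (-ξ) hneg
    rw [map_neg, h1, map_neg, LinearMap.neg_apply] at h2
    -- h2 : -(B ξ w • ξ - w) = (-(B ξ w)) • (-ξ) - w
    have h3 : -(B ξ w • ξ - w) = B ξ w • ξ - w := by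
      rw [h2]; module
    have h4 : (2 : ℝ) • (B ξ w • ξ - w) = 0 := by
      linear_combination (norm := module) -h3
    have h5 : B ξ w • ξ - w = 0 :=
      (smul_eq_zero.mp h4).resolve_left two_ne_zero
    exact (sub_eq_zero.mp h5).symm
  have k1 := key u₁ hu₁
  have k2 := key u₂ hu₂
  have hc1 : B u₁ w ≠ 0 := fun h => hw (by rw [k1, h, zero_smul])
  obtain ⟨-, h2⟩ := linearIndependent_fin2.mp hind
  have heq : B u₁ w • u₁ = B u₂ w • u₂ := k1.symm.trans k2
  exact h2 (B u₂ w / B u₁ w) (by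
    show (B u₂ w / B u₁ w) • u₂ = u₁
    rw [div_eq_inv_mul, mul_smul, ← heq, inv_smul_smul₀ hc1])
end

section
/- Let G : ℝ⁴ → ℝ⁴ → ℝ be a symmetric bilinear form such that G(ξ,ξ) = 0 for every timelike vector ξ. Then G = 0, i.e., G(u,v) = 0 for all u, v ∈ ℝ⁴. (This is the paper's claim that since Reichenbach's universal force field G_ab must be symmetric, the vector Gᵃ_b ξᵇ can be orthogonal to ξᵃ for all timelike vectors ξ at a point only if G_ab vanishes at that point; equivalently, a symmetric rank-2 field cannot produce forces orthogonal to every possible worldline unless it is zero.) -/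
/-- A symmetric bilinear form on ℝ⁴ that vanishes on every timelike vector
(equivalently: whose associated force is η-orthogonal to every timelike vector)
must vanish identically. -/
theorem symm_bilinear_vanishing_on_timelike_is_zero
    (G : (Fin 4 → ℝ) →ₗ[ℝ] (Fin 4 → ℝ) →ₗ[ℝ] ℝ)
    (hGsymm : ∀ u v : Fin 4 → ℝ, G u v = G v u)
    (h : ∀ ξ : Fin 4 → ℝ, eta ξ ξ > 0 → G ξ ξ = 0) :
    ∀ u v : Fin 4 → ℝ, G u v = 0 := by
  set e0 : Fin 4 → ℝ := ![1, 0, 0, 0] with he0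
  have he0eta : eta e0 e0 = 1 := by simp [eta, he0]
  have hA : G e0 e0 = 0 := h e0 (by rw [he0eta]; norm_num)
  -- Step 1: G(v,v) = 0 for all v
  have hdiag : ∀ v : Fin 4 → ℝ, G v v = 0 := by
    intro v
    set E : ℝ := eta v v with hE
    set K : ℝ := 1 + |v 0| + |E| with hK
    have hKpos : 0 < K := by positivity
    set ε : ℝ := 1 / (2 * K) with hεd
    have hεpos : 0 < ε := by positivity
    have habs1 : |v 0| ≤ K - 1 - |E| := by rw [hK]; linarith [abs_nonneg E]
    have hv0 : |v 0| < K := by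
      have := abs_nonneg E; rw [hK]; linarith
    have hEk : |E| < K := by
      have := abs_nonneg (v 0); rw [hK]; linarith
    have hbound : ∀ s : ℝ, |s| = ε → 1 + 2 * s * v 0 + s ^ 2 * E > 0 := by
      intro s hs
      have h1 : |2 * s * v 0 + s ^ 2 * E| < 1 := by
        have hsε : |s| = ε := hs
        have : |2 * s * v 0 + s ^ 2 * E| ≤ 2 * ε * |v 0| + ε ^ 2 * |E| := by
          calc |2 * s * v 0 + s ^ 2 * E| ≤ |2 * s * v 0| + |s ^ 2 * E| := abs_add_le _ _
            _ = 2 * ε * |v 0| + ε ^ 2 * |E| := by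
                rw [abs_mul, abs_mul, abs_mul, abs_two, abs_pow, hsε]
        have hK1 : 1 ≤ K := by rw [hK]; linarith [abs_nonneg (v 0), abs_nonneg E]
        have hεle : ε ≤ 1 := by
          rw [hεd, div_le_one (by linarith)]; linarith
        have hε2 : ε ^ 2 ≤ ε := by nlinarith [hεpos, hεle]
        have hεK : ε * K = 1 / 2 := by
          field_simp [hεd]; rw [hεd]; field_simp
        nlinarith [abs_nonneg (v 0), abs_nonneg E, hv0, hEk, hεpos]
      have := (abs_lt.mp h1).1
      linarith
    have expand : ∀ s : ℝ, G (e0 + s • v) (e0 + s • v)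
        = G e0 e0 + 2 * s * G e0 v + s ^ 2 * G v v := by
      intro s
      simp [map_add, map_smul, smul_eq_mul, hGsymm v e0]
      ring
    have etaexp : ∀ s : ℝ, eta (e0 + s • v) (e0 + s • v)
        = 1 + 2 * s * v 0 + s ^ 2 * E := by
      intro s
      simp [eta, he0, hE, Pi.add_apply, Pi.smul_apply, smul_eq_mul]
      ring
    have h1 : G (e0 + ε • v) (e0 + ε • v) = 0 := by
      apply h; rw [etaexp]; exact hbound ε (abs_of_pos hεpos)
    have h2 : G (e0 + (-ε) • v) (e0 + (-ε) • v) = 0 := by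
      apply h; rw [etaexp]; apply hbound; rw [abs_neg]; exact abs_of_pos hεpos
    rw [expand] at h1 h2
    have hε2 : ε ^ 2 ≠ 0 := by positivity
    have : 2 * (ε ^ 2 * G v v) = 0 := by linarith [h1, h2, hA]
    have : ε ^ 2 * G v v = 0 := by linarith
    exact (mul_eq_zero.mp this).resolve_left hε2
  -- Step 2: polarization
  intro u v
  have hp := hdiag (u + v)
  simp [map_add, hdiag u, hdiag v, hGsymm v u] at hp
  linarith [hdiag u, hdiag v, hp]
end

section
/- Pointwise form of Proposition 1. Let V be a 4-dimensional real vector space, let t : V → ℝ be a nonzero linear functional, and let h : V* → V be a linear map from the dual space to V that is symmetric (ω(h σ) = σ(h ω) for all covectors ω, σ) and whose kernel is exactly the span of t. Let κ : V → V → ℝ be an alternating bilinear form and define C : V → V → V by C(u,v) = (t u) • h(κ(v,·)) + (t v) • h(κ(u,·)), where κ(v,·) denotes the covector u ↦ κ(v,u). Then there exists a unique alternating bilinear form G : V → V → ℝ such that for every ξ ∈ V with t ξ = 1, h applied to the covector u ↦ G(u,ξ) equals −C(ξ,ξ); indeed G = 2κ works. (In the paper: given a classical spacetime (M, t_a, h^{ab},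 ∇) and any other torsion-free derivative operator ∇̃ compatible with t_a and h^{ab}, whose difference tensor is necessarily C^a_{bc} = 2h^{an}t_{(b}κ_{c)n} for antisymmetric κ_{ab}, there is a unique antisymmetric field G_{ab} such that a timelike curve with unit tangent ξᵃ is a ∇-geodesic iff ξⁿ∇̃ₙξᵃ = h^{am}G_{mn}ξⁿ; here −C(ξ,ξ) is the ∇̃-acceleration of a ∇-geodesic with unit tangent ξ.) -/
private lemma alt_skew {V : Type*} [AddCommGroup V] [Module ℝ V]
    (κ : V →ₗ[ℝ] V →ₗ[ℝ] ℝ) (hκ : ∀ v : V, κ v v = 0) (u v : V) :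
    κ u v = -κ v u := by
  have := hκ (u + v)
  simp only [map_add, LinearMap.add_apply, hκ] at this
  linarith

/-- Pointwise form of Proposition 1: given the classical-metric data `t` (temporal
metric, a nonzero covector) and `h` (spatial metric, a symmetric map from covectors
to vectors with kernel exactly the span of `t`) on a 4-dimensional vector space,
and an antisymmetric `κ` determining the difference tensor
`C(u,v) = (t u) • h(κ(v,·)) + (t v) • h(κ(u,·))`, there is a unique antisymmetric
bilinear form `G` such that for every unit timelike vector `ξ` (i.e. `t ξ = 1`),
`h` applied to the covector `u ↦ G(u,ξ)` equals `-C(ξ,ξ)`; indeed `G = 2κ` works. -/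
theorem classical_universal_force_exists_unique
    {V : Type*} [AddCommGroup V] [Module ℝ V] [FiniteDimensional ℝ V]
    (hdim : Module.finrank ℝ V = 4)
    (t : Module.Dual ℝ V) (ht : t ≠ 0)
    (h : Module.Dual ℝ V →ₗ[ℝ] V)
    (hsymm : ∀ ω σ : Module.Dual ℝ V, ω (h σ) = σ (h ω))
    (hker : LinearMap.ker h = Submodule.span ℝ {t})
    (κ : V →ₗ[ℝ] V →ₗ[ℝ] ℝ) (hκ : ∀ v : V, κ v v = 0)
    (C : V → V → V)
    (hC : ∀ u v : V, C u v = t u • h (κ v) + t v • h (κ u)) :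
    ((∀ v : V, (2 • κ) v v = 0) ∧
      (∀ ξ : V, t ξ = 1 → h ((2 • κ).flip ξ) = -C ξ ξ)) ∧
    (∃! G : V →ₗ[ℝ] V →ₗ[ℝ] ℝ,
      (∀ v : V, G v v = 0) ∧ (∀ ξ : V, t ξ = 1 → h (G.flip ξ) = -C ξ ξ)) := by
  have key : ∀ v : V, (2 • κ) v v = 0 := by
    intro v
    simp [hκ]
  have flipeq : ∀ ξ : V, (2 • κ).flip ξ = (-2 : ℝ) • (κ ξ) := by
    intro ξ
    ext u
    simp [LinearMap.flip_apply, alt_skew κ hκ u ξ]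
  have works : ∀ ξ : V, t ξ = 1 → h ((2 • κ).flip ξ) = -C ξ ξ := by
    intro ξ hξ
    rw [flipeq, hC, hξ, map_smul, one_smul]
    module
  refine ⟨⟨key, works⟩, 2 • κ, ⟨key, works⟩, ?_⟩
  rintro G ⟨hG0, hGw⟩
  -- uniqueness
  obtain ⟨x, hx⟩ : ∃ x : V, t x ≠ 0 := by
    by_contra hcon
    push_neg at hcon
    exact ht (LinearMap.ext fun x => hcon x)
  set ξ₀ := (t x)⁻¹ • x with hξ₀
  have htξ₀ : t ξ₀ = 1 := by
    simp [hξ₀, inv_mul_cancel₀ hx]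
  set D := G - 2 • κ with hD
  have hD0 : ∀ v : V, D v v = 0 := by
    intro v; simp [hD, hG0, hκ]
  have hDunit : ∀ ξ : V, t ξ = 1 → D.flip ξ = 0 := by
    intro ξ hξ
    have hmem : D.flip ξ ∈ LinearMap.ker h := by
      rw [LinearMap.mem_ker]
      have : h (G.flip ξ) = h ((2 • κ).flip ξ) := by
        rw [hGw ξ hξ, works ξ hξ]
      have heq : D.flip ξ = G.flip ξ - (2 • κ).flip ξ := by
        ext u; simp [hD, LinearMap.flip_apply]
      rw [heq, map_sub, this, sub_self]
    rw [hker, Submodule.mem_span_singleton] at hmem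
    obtain ⟨c, hc⟩ := hmem
    have hcval : D ξ ξ = c * t ξ := by
      have := congrArg (fun f : Module.Dual ℝ V => f ξ) hc.symm
      simpa [LinearMap.flip_apply] using this
    rw [hD0, hξ, mul_one] at hcval
    rw [← hc, ← hcval, zero_smul]
  have hDall : ∀ v : V, D.flip v = 0 := by
    intro v
    have h1 : t (v - t v • ξ₀ + ξ₀) = 1 := by
      simp [htξ₀]
    have h2 := hDunit _ h1
    have h3 := hDunit ξ₀ htξ₀
    have h4 : D.flip (v - t v • ξ₀ + ξ₀) =
        D.flip v - t v • D.flip ξ₀ + D.flip ξ₀ := by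
      simp [map_add, map_sub, map_smul]
    rw [h2, h3] at h4
    simpa using h4.symm
  have : D = 0 := by
    ext u v
    have := congrArg (fun f : Module.Dual ℝ V => f u) (hDall v)
    simpa [LinearMap.flip_apply] using this
  have := (sub_eq_zero (a := G) (b := 2 • κ)).mp (show G - 2 • κ = 0 from hD ▸ this)
  exact this
end
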